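/- Let (i*, J) be a cluster in a metric space, J' ⊆ J its core (the points of J closest to i*), S a set of facilities, and suppose ∑_{j∈J'} d(j,S) ≤ ε·∑_{j∈J'} d(i*,j) for ε ∈ (0,1). Let p ∈ S be the facility closest to i*. Then d(i*, p) ≤ (1+ε)·d̄ where d̄ = (1/|J|)∑_{j∈J} d(i*,j). -/
import Mathlib


open Finset

/-- For a cluster `(i*, J)` with core `J'` (the `⌈ε|J|⌉` points of `J` closest to `i*`),
if `∑_{j∈J'} d(j,S) ≤ ε·∑_{j∈J'} d(i*,j)`, then the facility `p ∈ S` closest to `i*`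
satisfies `d(i*, p) ≤ (1+ε)·d̄`, where `d̄ = (1/|J|)∑_{j∈J} d(i*,j)`. -/
theorem stmt13 {V : Type*} [MetricSpace V] (istar : V) (J J' S : Finset V)
    (hJ : J.Nonempty) (hS : S.Nonempty) (ε : ℝ) (hε0 : 0 < ε) (hε1 : ε < 1)
    (hsub : J' ⊆ J) (hcard : J'.card = ⌈ε * (J.card : ℝ)⌉₊)
    (hcore : ∀ j ∈ J', ∀ j'' ∈ J, j'' ∉ J' → dist istar j ≤ dist istar j'')
    (hclose : (∑ j ∈ J', S.inf' hS fun i => dist j i) ≤ ε * ∑ j ∈ J', dist istar j)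
    (p : V) (hp : p ∈ S) (hpmin : ∀ q ∈ S, dist istar p ≤ dist istar q) :
    dist istar p ≤ (1 + ε) * ((∑ j ∈ J, dist istar j) / (J.card : ℝ)) := by
  classical
  have hJpos : (0:ℝ) < J.card := by
    exact_mod_cast Finset.card_pos.mpr hJ
  have hJ'ne : J'.Nonempty := by
    rw [← Finset.card_pos, hcard]
    exact Nat.ceil_pos.mpr (by positivity)
  have hJ'pos : (0:ℝ) < J'.card := by exact_mod_cast Finset.card_pos.mpr hJ'ne
  set A := ∑ j ∈ J', dist istar j with hA
  set B := ∑ j ∈ J, dist istar j with hB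
  -- Step 1: |J'| * d(i*,p) ≤ (1+ε) * A
  have hstep1 : (J'.card : ℝ) * dist istar p ≤
      A + ∑ j ∈ J', S.inf' hS fun i => dist j i := by
    rw [hA, ← Finset.sum_add_distrib]
    calc (J'.card:ℝ) * dist istar p = ∑ _j ∈ J', dist istar p := by
          rw [Finset.sum_const, nsmul_eq_mul]
      _ ≤ _ := Finset.sum_le_sum fun j hj => by
          obtain ⟨q, hq, hqe⟩ := S.exists_mem_eq_inf' hS (fun i => dist j i)
          calc dist istar p ≤ dist istar q := hpmin q hq
            _ ≤ dist istar j + dist j q := dist_triangle _ _ _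
            _ = dist istar j + S.inf' hS fun i => dist j i := by rw [hqe]
  have h1 : (J'.card:ℝ) * dist istar p ≤ (1 + ε) * A := by nlinarith [hstep1, hclose]
  -- Step 3: |J| * A ≤ |J'| * B
  have hmid : (((J \ J').card:ℝ)) * A ≤ (J'.card:ℝ) * ∑ j ∈ J \ J', dist istar j := by
    calc (((J \ J').card:ℝ)) * A = ∑ _j ∈ J \ J', A := by
          rw [Finset.sum_const, nsmul_eq_mul]
      _ ≤ ∑ j'' ∈ J \ J', (J'.card:ℝ) * dist istar j'' := by
          refine Finset.sum_le_sum fun j'' hj'' => ?_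
          have hm := Finset.mem_sdiff.mp hj''
          calc A ≤ ∑ j ∈ J', dist istar j'' :=
                Finset.sum_le_sum fun j hj => hcore j hj j'' hm.1 hm.2
            _ = (J'.card:ℝ) * dist istar j'' := by rw [Finset.sum_const, nsmul_eq_mul]
      _ = (J'.card:ℝ) * ∑ j ∈ J \ J', dist istar j := by rw [Finset.mul_sum]
  have hsplit : (∑ j ∈ J \ J', dist istar j) + A = B := Finset.sum_sdiff hsub
  have hcards : ((J \ J').card : ℝ) + (J'.card : ℝ) = (J.card : ℝ) := by
    exact_mod_cast Finset.card_sdiff_add_card_eq_card hsub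
  have h3 : (J.card:ℝ) * A ≤ (J'.card:ℝ) * B := by
    calc (J.card:ℝ) * A = ((J \ J').card:ℝ) * A + (J'.card:ℝ) * A := by
          rw [← hcards]; ring
      _ ≤ (J'.card:ℝ) * (∑ j ∈ J \ J', dist istar j) + (J'.card:ℝ) * A := by
          linarith [hmid]
      _ = (J'.card:ℝ) * B := by rw [← hsplit]; ring
  -- Combine
  rw [show (1 + ε) * (B / (J.card:ℝ)) = ((1 + ε) * B) / (J.card:ℝ) by ring,
    le_div_iff₀ hJpos]
  nlinarith [mul_le_mul_of_nonneg_left h3 (by linarith : (0:ℝ) ≤ 1 + ε),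
    mul_le_mul_of_nonneg_right h1 hJpos.le, hJ'pos]
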